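/- Fix x₀ in (0, π/2) and let b = -log(x₀/tan x₀)/x₀². Then b > 1/3. -/

import Mathlib

open Real

private lemma aux_g_pos {x : ℝ} (hx : 0 < x) (hx2 : x < π/2) :
    0 < Real.sin x * (3 - x^2) - 3*x*Real.cos x := by
  set g : ℝ → ℝ := fun y => Real.sin y * (3 - y^2) - 3*y*Real.cos y with hg
  have hderiv : ∀ y : ℝ, HasDerivAt g (y * Real.sin y - y^2 * Real.cos y) y := by
    intro y
    have h1 : HasDerivAt (fun y : ℝ => Real.sin y * (3 - y^2))
        (Real.cos y * (3 - y^2) + Real.sin y * (-(2*y))) y := by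
      exact (Real.hasDerivAt_sin y).mul (((hasDerivAt_id y).pow 2).const_sub 3 |>.congr_deriv (by simp only [id_eq]; ring))
    have h2 : HasDerivAt (fun y : ℝ => 3*y*Real.cos y)
        (3 * Real.cos y + 3*y * (-Real.sin y)) y := by
      have := ((hasDerivAt_id y).const_mul 3).mul (Real.hasDerivAt_cos y)
      exact this.congr_deriv (by simp only [id_eq]; ring)
    have := h1.sub h2
    exact this.congr_deriv (by ring)
  have hmono : StrictMonoOn g (Set.Icc 0 (π/2)) := by
    apply strictMonoOn_of_deriv_pos (convex_Icc _ _)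
    · exact Continuous.continuousOn (by fun_prop)
    · intro y hy
      rw [interior_Icc] at hy
      rw [(hderiv y).deriv]
      have hy0 : 0 < y := hy.1
      have hyc : 0 < Real.cos y := Real.cos_pos_of_mem_Ioo ⟨by linarith [hy.1, Real.pi_pos], hy.2⟩
      have htan : y < Real.tan y := Real.lt_tan hy.1 hy.2
      have : y * Real.cos y < Real.sin y := by
        rw [Real.tan_eq_sin_div_cos, lt_div_iff₀ hyc] at htan
        linarith
      nlinarith
  have h0 : g 0 = 0 := by simp [hg]
  have := hmono (by constructor <;> [exact le_refl 0; positivity]) ⟨hx.le, hx2.le⟩ hx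
  simpa [hg, h0] using this

theorem stmt_11 (x₀ : ℝ) (hx₀ : x₀ ∈ Set.Ioo (0:ℝ) (Real.pi/2)) :
    -Real.log (x₀ / Real.tan x₀) / x₀^2 > 1/3 := by
  obtain ⟨hx, hx2⟩ := hx₀
  have hcos : 0 < Real.cos x₀ := Real.cos_pos_of_mem_Ioo ⟨by linarith [Real.pi_pos], hx2⟩
  have htanpos : 0 < Real.tan x₀ := Real.tan_pos_of_pos_of_lt_pi_div_two hx hx2
  have hx3 : x₀^2 < 3 := by nlinarith [Real.pi_lt_d2, Real.pi_pos]
  have hg := aux_g_pos hx hx2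
  -- tan x₀ > 3x₀/(3 - x₀²)
  have htan : 3*x₀/(3 - x₀^2) < Real.tan x₀ := by
    rw [Real.tan_eq_sin_div_cos, div_lt_div_iff₀ (by linarith) hcos]
    nlinarith
  -- tan x₀ / x₀ > exp(x₀²/3)
  have hexp : Real.exp (x₀^2/3) < Real.tan x₀ / x₀ := by
    have h1 : (1 : ℝ) - x₀^2/3 < Real.exp (-(x₀^2/3)) := by
      have := Real.add_one_lt_exp (x := -(x₀^2/3)) (neg_ne_zero.mpr (by positivity))
      linarith
    have h2 : Real.exp (x₀^2/3) < 3/(3 - x₀^2) := by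
      have he := Real.exp_pos (x₀^2/3)
      rw [Real.exp_neg] at h1
      have h1' := mul_lt_mul_of_pos_left h1 he
      rw [mul_inv_cancel₀ he.ne'] at h1'
      rw [lt_div_iff₀ (by linarith)]
      nlinarith
    have h3 : 3/(3 - x₀^2) ≤ Real.tan x₀ / x₀ := by
      rw [div_le_div_iff₀ (by linarith) hx]
      have := (div_lt_iff₀ (by linarith : (0:ℝ) < 3 - x₀^2)).mp htan
      nlinarith
    linarith
  have hlog : x₀^2/3 < Real.log (Real.tan x₀ / x₀) := by
    rw [Real.lt_log_iff_exp_lt (by positivity)]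
    exact hexp
  have : -Real.log (x₀ / Real.tan x₀) = Real.log (Real.tan x₀ / x₀) := by
    rw [← Real.log_inv, inv_div]
  rw [this, gt_iff_lt, div_lt_div_iff₀ (by norm_num) (by positivity)]
  linarith
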